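/- Let N be a positive integer and m a nonnegative integer. Then det_{1≤i,j≤N}( C(N+m−i+1, m+i−j) ) = ∏_{i=1}^{N} ( (N+m−i+1)! · (i−1)! · (2m+i+1)_{i−1} ) / ( (m+i−1)! · (2N−2i+1)! ). -/

import Mathlib

/-- Shifted factorial `(a)_k = a(a+1)···(a+k-1)`. -/
def shifted (a : ℚ) (k : ℕ) : ℚ := ∏ t ∈ Finset.range k, (a + t)

/-- Binomial coefficient `C(p,q)` with integer lower index, equal to `0` if `q < 0` or `q > p`. -/
def binom (p : ℕ) (q : ℤ) : ℚ := if q < 0 then 0 else (Nat.choose p q.toNat : ℚ)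

open Polynomial Finset Matrix

/-- Auxiliary polynomial whose evaluation at `x = i` gives (up to a row factor)
the matrix entries. -/
noncomputable def Qp (N m j : ℕ) : Polynomial ℚ :=
  (∏ t ∈ Finset.range j, (X + C ((m : ℚ) - t))) *
    ∏ s ∈ Finset.range (N - 1 - j), (C ((N : ℚ) + j + s + 1) - C 2 * X)

lemma Qp_eval (N m j : ℕ) (x : ℚ) :
    (Qp N m j).eval x =
      (∏ t ∈ Finset.range j, (x + ((m : ℚ) - t))) *
        ∏ s ∈ Finset.range (N - 1 - j), (((N : ℚ) + j + s + 1) - 2 * x) := by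
  simp [Qp, eval_prod]

lemma Qp_natDegree_lt (N m j : ℕ) (hj : j < N) : (Qp N m j).natDegree < N := by
  have h1 : (∏ t ∈ Finset.range j, (X + C ((m : ℚ) - t))).natDegree ≤ j := by
    refine le_trans (Polynomial.natDegree_prod_le _ _) ?_
    refine le_trans (Finset.sum_le_card_nsmul _ _ 1 ?_) (by simp)
    intro t _
    exact le_of_eq (natDegree_X_add_C _)
  have h2 : (∏ s ∈ Finset.range (N - 1 - j),
      (C ((N : ℚ) + j + s + 1) - C 2 * X)).natDegree ≤ N - 1 - j := by
    refine le_trans (Polynomial.natDegree_prod_le _ _) ?_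
    refine le_trans (Finset.sum_le_card_nsmul _ _ 1 ?_) (by simp)
    intro s _
    refine le_trans (natDegree_sub_le _ _) (max_le ?_ ?_)
    · rw [natDegree_C]; norm_num
    · rw [natDegree_C_mul_X (2 : ℚ) (by norm_num)]
  have h3 := Polynomial.natDegree_mul_le (p := ∏ t ∈ Finset.range j, (X + C ((m : ℚ) - t)))
    (q := ∏ s ∈ Finset.range (N - 1 - j), (C ((N : ℚ) + j + s + 1) - C 2 * X))
  have : (Qp N m j).natDegree ≤ j + (N - 1 - j) := le_trans h3 (by omega)
  omega

lemma prod_desc (d k : ℕ) :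
    ∏ t ∈ Finset.range k, ((d : ℚ) + k - t) =
      (Nat.factorial (d + k) : ℚ) / (Nat.factorial d : ℚ) := by
  induction k generalizing d with
  | zero =>
    simp only [Finset.range_zero, Finset.prod_empty, Nat.add_zero]
    exact (div_self (by exact_mod_cast Nat.factorial_ne_zero d)).symm
  | succ k ih =>
    rw [Finset.prod_range_succ]
    have h : ∀ t ∈ Finset.range k, ((d : ℚ) + (k + 1 : ℕ) - t) = ((d + 1 : ℕ) : ℚ) + k - t := by
      intro t _; push_cast; ring
    rw [Finset.prod_congr rfl h, ih (d + 1)]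
    have hd : (Nat.factorial d : ℚ) ≠ 0 := by
      exact_mod_cast Nat.factorial_ne_zero d
    have hd1 : (Nat.factorial (d + 1) : ℚ) = (d + 1) * Nat.factorial d := by
      rw [Nat.factorial_succ]; push_cast; ring
    rw [show d + 1 + k = d + (k + 1) by omega] at *
    rw [hd1]
    have hne : ((d : ℚ) + 1) ≠ 0 := by positivity
    field_simp
    push_cast
    ring

lemma prod_asc (c L : ℕ) :
    ∏ s ∈ Finset.range L, ((c : ℚ) + 1 + s) =
      (Nat.factorial (c + L) : ℚ) / (Nat.factorial c : ℚ) := by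
  induction L with
  | zero =>
    simp only [Finset.range_zero, Finset.prod_empty, Nat.add_zero]
    exact (div_self (by exact_mod_cast Nat.factorial_ne_zero c)).symm
  | succ L ih =>
    rw [Finset.prod_range_succ, ih]
    have hc : (Nat.factorial c : ℚ) ≠ 0 := by exact_mod_cast Nat.factorial_ne_zero c
    rw [show c + (L + 1) = (c + L) + 1 by omega, Nat.factorial_succ]
    push_cast
    field_simp
    ring

lemma entry_eq (N m i j : ℕ) (hi : i < N) (hj : j < N) :
    binom (N + m - i) ((m : ℤ) + i - j) =
      (Nat.factorial (N + m - i) : ℚ) /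
          ((Nat.factorial (m + i) : ℚ) * (Nat.factorial (2 * N - 2 * i - 1) : ℚ)) *
        (Qp N m j).eval (i : ℚ) := by
  rw [Qp_eval]
  by_cases hq : m + i < j
  · have hneg : ((m : ℤ) + i - j) < 0 := by omega
    rw [binom, if_pos hneg]
    have hz : ∏ t ∈ Finset.range j, ((i : ℚ) + ((m : ℚ) - t)) = 0 := by
      refine Finset.prod_eq_zero (Finset.mem_range.mpr hq) ?_
      push_cast; ring
    rw [hz]; ring
  · push_neg at hq
    have hq' : ¬ ((m : ℤ) + i - j < 0) := by omega
    rw [binom, if_neg hq']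
    have htn : ((m : ℤ) + i - j).toNat = m + i - j := by omega
    rw [htn]
    by_cases hp : N + j < 2 * i
    · rw [Nat.choose_eq_zero_of_lt (by omega)]
      have hz : ∏ s ∈ Finset.range (N - 1 - j), ((N : ℚ) + j + s + 1 - 2 * i) = 0 := by
        refine Finset.prod_eq_zero (i := 2 * i - N - j - 1)
          (Finset.mem_range.mpr (by omega)) ?_
        have hc : ((2 * i - N - j - 1 : ℕ) : ℚ) = 2 * i - N - j - 1 := by
          rw [show 2 * i - N - j - 1 = 2 * i - (N + j + 1) by omega,
            Nat.cast_sub (by omega)]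
          push_cast; ring
        rw [hc]; ring
      rw [hz]; ring
    · push_neg at hp
      have hle : m + i - j ≤ N + m - i := by omega
      rw [Nat.cast_choose ℚ hle]
      have e1 : ∏ t ∈ Finset.range j, ((i : ℚ) + ((m : ℚ) - t)) =
          (Nat.factorial (m + i) : ℚ) / (Nat.factorial (m + i - j) : ℚ) := by
        have h := prod_desc (m + i - j) j
        rw [show m + i - j + j = m + i by omega] at h
        rw [← h]
        refine Finset.prod_congr rfl ?_
        intro t _
        rw [Nat.cast_sub hq]
        push_cast; ring
      have e2 : ∏ s ∈ Finset.range (N - 1 - j), ((N : ℚ) + j + s + 1 - 2 * i) =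
          (Nat.factorial (2 * N - 2 * i - 1) : ℚ) / (Nat.factorial (N + j - 2 * i) : ℚ) := by
        have h := prod_asc (N + j - 2 * i) (N - 1 - j)
        rw [show N + j - 2 * i + (N - 1 - j) = 2 * N - 2 * i - 1 by omega] at h
        rw [← h]
        refine Finset.prod_congr rfl ?_
        intro s _
        rw [Nat.cast_sub hp]
        push_cast; ring
      rw [e1, e2, show N + m - i - (m + i - j) = N + j - 2 * i by omega]
      have n1 : (Nat.factorial (m + i) : ℚ) ≠ 0 := by exact_mod_cast Nat.factorial_ne_zero _
      have n2 : (Nat.factorial (2 * N - 2 * i - 1) : ℚ) ≠ 0 := by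
        exact_mod_cast Nat.factorial_ne_zero _
      have n3 : (Nat.factorial (m + i - j) : ℚ) ≠ 0 := by exact_mod_cast Nat.factorial_ne_zero _
      have n4 : (Nat.factorial (N + j - 2 * i) : ℚ) ≠ 0 := by exact_mod_cast Nat.factorial_ne_zero _
      field_simp

lemma eval_decomp (N m : ℕ) (xs : Fin N → ℚ) :
    (Matrix.of fun i j : Fin N => (Qp N m j).eval (xs i)) =
      Matrix.vandermonde xs * Matrix.of (fun k j : Fin N => (Qp N m j).coeff k) := by
  ext i j
  rw [Matrix.mul_apply]
  simp only [Matrix.of_apply, Matrix.vandermonde_apply]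
  rw [Polynomial.eval_eq_sum_range' (Qp_natDegree_lt N m j j.isLt) (xs i),
    ← Fin.sum_univ_eq_sum_range (fun k => (Qp N m j).coeff k * xs i ^ k) N]
  exact Finset.sum_congr rfl fun k _ => (mul_comm _ _).symm

lemma tri (N m : ℕ) (i j : Fin N) (hij : i < j) :
    (Qp N m (j : ℕ)).eval ((i : ℚ) - m) = 0 := by
  rw [Qp_eval]
  have hz : ∏ t ∈ Finset.range (j : ℕ), (((i : ℚ) - m) + ((m : ℚ) - t)) = 0 :=
    Finset.prod_eq_zero (Finset.mem_range.mpr hij) (by ring)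
  rw [hz]; ring

lemma diag_eq (N m i : ℕ) (hi : i < N) :
    (Qp N m i).eval ((i : ℚ) - m) =
      (Nat.factorial i : ℚ) *
        shifted (2 * (m : ℚ) + ((N - 1 - i : ℕ) : ℚ) + 2) (N - 1 - i) := by
  rw [Qp_eval]
  have e1 : ∏ t ∈ Finset.range i, (((i : ℚ) - m) + ((m : ℚ) - t)) = (Nat.factorial i : ℚ) := by
    have h := prod_desc 0 i
    simp only [Nat.cast_zero, zero_add, Nat.factorial_zero, Nat.cast_one, div_one] at h
    rw [← h]
    refine Finset.prod_congr rfl ?_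
    intro t _; ring
  have hc : ((N - 1 - i : ℕ) : ℚ) = (N : ℚ) - 1 - i := by
    rw [show N - 1 - i = N - (1 + i) by omega, Nat.cast_sub (by omega)]
    push_cast; ring
  have e2 : ∏ s ∈ Finset.range (N - 1 - i), ((N : ℚ) + i + s + 1 - 2 * ((i : ℚ) - m)) =
      shifted (2 * (m : ℚ) + ((N - 1 - i : ℕ) : ℚ) + 2) (N - 1 - i) := by
    rw [shifted]
    refine Finset.prod_congr rfl ?_
    intro s _
    rw [hc]; ring
  rw [e1, e2]

theorem binomial_det_eval (N m : ℕ) (hN : 1 ≤ N) :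
    Matrix.det (Matrix.of fun i j : Fin N =>
        binom (N + m - (i:ℕ)) ((m:ℤ) + ((i:ℕ):ℤ) - ((j:ℕ):ℤ)))
    = ∏ i ∈ Finset.range N,
        ((Nat.factorial (N + m - i) : ℚ) * (Nat.factorial i : ℚ) *
            shifted (2*(m:ℚ) + (i:ℚ) + 2) i) /
          ((Nat.factorial (m + i) : ℚ) * (Nat.factorial (2*N - 2*i - 1) : ℚ)) := by
  classical
  have hM : (Matrix.of fun i j : Fin N =>
      binom (N + m - (i:ℕ)) ((m:ℤ) + ((i:ℕ):ℤ) - ((j:ℕ):ℤ))) =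
      Matrix.diagonal (fun i : Fin N =>
        (Nat.factorial (N + m - (i:ℕ)) : ℚ) /
          ((Nat.factorial (m + (i:ℕ)) : ℚ) * (Nat.factorial (2 * N - 2 * (i:ℕ) - 1) : ℚ))) *
      Matrix.of (fun i j : Fin N => (Qp N m j).eval ((i : ℕ) : ℚ)) := by
    ext i j
    rw [Matrix.diagonal_mul, Matrix.of_apply, Matrix.of_apply]
    exact entry_eq N m i j i.isLt j.isLt
  rw [hM, Matrix.det_mul, Matrix.det_diagonal]
  have hV : (Matrix.vandermonde fun i : Fin N => ((i : ℕ) : ℚ)).det =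
      (Matrix.vandermonde fun i : Fin N => ((i : ℕ) : ℚ) - m).det := by
    rw [Matrix.det_vandermonde, Matrix.det_vandermonde]
    refine Finset.prod_congr rfl fun i _ => Finset.prod_congr rfl fun j _ => by ring
  have hEq : (Matrix.of fun i j : Fin N => (Qp N m j).eval ((i : ℕ) : ℚ)).det =
      (Matrix.of fun i j : Fin N => (Qp N m j).eval (((i : ℕ) : ℚ) - m)).det := by
    rw [eval_decomp N m (fun i : Fin N => ((i : ℕ) : ℚ)),
      eval_decomp N m (fun i : Fin N => ((i : ℕ) : ℚ) - m),
      Matrix.det_mul, Matrix.det_mul, hV]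
  rw [hEq]
  rw [Matrix.det_of_lowerTriangular
    (Matrix.of fun i j : Fin N => (Qp N m ((j : ℕ))).eval (((i : ℕ) : ℚ) - m))
    (fun i j hij => tri N m i j (OrderDual.toDual_lt_toDual.mp hij))]
  have hdiag : ∀ i : Fin N, (Matrix.of fun i j : Fin N =>
      (Qp N m j).eval (((i : ℕ) : ℚ) - m)) i i =
      (Nat.factorial (i : ℕ) : ℚ) *
        shifted (2 * (m : ℚ) + ((N - 1 - (i : ℕ) : ℕ) : ℚ) + 2) (N - 1 - (i : ℕ)) :=
    fun i => diag_eq N m i i.isLt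
  rw [Finset.prod_congr rfl (fun i _ => hdiag i)]
  rw [Fin.prod_univ_eq_prod_range (fun i =>
    (Nat.factorial (N + m - i) : ℚ) /
      ((Nat.factorial (m + i) : ℚ) * (Nat.factorial (2 * N - 2 * i - 1) : ℚ))) N]
  rw [Fin.prod_univ_eq_prod_range (fun i =>
    (Nat.factorial i : ℚ) *
      shifted (2 * (m : ℚ) + ((N - 1 - i : ℕ) : ℚ) + 2) (N - 1 - i)) N]
  rw [Finset.prod_mul_distrib]
  have hrefl : ∏ i ∈ Finset.range N,
      shifted (2 * (m : ℚ) + ((N - 1 - i : ℕ) : ℚ) + 2) (N - 1 - i) =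
      ∏ i ∈ Finset.range N, shifted (2 * (m : ℚ) + (i : ℚ) + 2) i :=
    Finset.prod_range_reflect (fun k => shifted (2 * (m : ℚ) + (k : ℚ) + 2) k) N
  rw [hrefl, ← Finset.prod_mul_distrib, ← Finset.prod_mul_distrib]
  refine Finset.prod_congr rfl ?_
  intro i _
  ring
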